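/- Let n ≥ 2, let A be a tensor in ℂ^{n×n×2}, and let ‖·‖ be a norm on ℂ^{n×n×2}. Then inf { ‖A − B‖ : B ∈ ℂ^{n×n×2} and rank(B) = n } = 0; that is, every tensor in ℂ^{n×n×2} may be approximated arbitrarily closely by tensors whose tensor ranks are equal to n. -/

import Mathlib

open Matrix Finset

/-- The tensor rank of an array `A ∈ 𝔽^{l×m×n}`: the minimal `r` such that `A` is a sum of
`r` elementary (decomposable) tensors `x ⊗ y ⊗ z = (x_i y_j z_k)`. -/
noncomputable def tensorRank {𝔽 : Type*} [Field 𝔽] {l m n : ℕ}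
    (A : Fin l → Fin m → Fin n → 𝔽) : ℕ :=
  sInf {r : ℕ | ∃ (x : Fin r → Fin l → 𝔽) (y : Fin r → Fin m → 𝔽) (z : Fin r → Fin n → 𝔽),
      A = ∑ i : Fin r, fun p q s => x i p * y i q * z i s}

/-- The multilinear matrix multiplication: `(L,M,N)·A` has entries
`b_{pqr} = Σ_{i,j,k} L_{pi} M_{qj} N_{rk} a_{ijk}`. -/
def mulAct {𝔽 : Type*} [Field 𝔽] {l m n : ℕ}
    (L : Matrix (Fin l) (Fin l) 𝔽) (M : Matrix (Fin m) (Fin m) 𝔽) (N : Matrix (Fin n) (Fin n) 𝔽)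
    (A : Fin l → Fin m → Fin n → 𝔽) : Fin l → Fin m → Fin n → 𝔽 :=
  fun p q r => ∑ i, ∑ j, ∑ k, L p i * M q j * N r k * A i j k

/-- The elementary (decomposable) tensor `x ⊗ y ⊗ z = (x_i y_j z_k)`. -/
def elemT {𝔽 : Type*} [Field 𝔽] {l m n : ℕ}
    (x : Fin l → 𝔽) (y : Fin m → 𝔽) (z : Fin n → 𝔽) : Fin l → Fin m → Fin n → 𝔽 :=
  fun i j k => x i * y j * z k


set_option maxHeartbeats 1000000

open Polynomial

section AuxLemmas

lemma snorm_sum_le {E ι : Type*} [AddCommGroup E] [Module ℂ E] (p : Seminorm ℂ E)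
    (s : Finset ι) (f : ι → E) : p (∑ i ∈ s, f i) ≤ ∑ i ∈ s, p (f i) := by
  classical
  induction s using Finset.induction_on with
  | empty => simp
  | insert _ _ h ih =>
      rw [Finset.sum_insert h, Finset.sum_insert h]
      exact le_trans (map_add_le_add p _ _) (by gcongr)

lemma evalCharpoly {m : ℕ} (M : Matrix (Fin m) (Fin m) ℂ) (t : ℂ) :
    M.charpoly.eval t = (Matrix.scalar (Fin m) t - M).det := by
  rw [Matrix.charpoly, _root_.eval_det, Matrix.matPolyEquiv_charmatrix]
  rw [Polynomial.eval_sub, Polynomial.eval_X, Polynomial.eval_C]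

lemma exists_near_avoid (S : Finset ℂ) (c : ℂ) {ε : ℝ} (hε : 0 < ε) :
    ∃ z : ℂ, z ∉ S ∧ ‖z - c‖ < ε := by
  by_contra hcon
  push_neg at hcon
  set f : ℕ → ℂ := fun j => c + Complex.ofReal (ε / (2 * (j + 1))) with hf
  have hpos : ∀ j : ℕ, 0 < ε / (2 * ((j : ℝ) + 1)) := by
    intro j; positivity
  have hdist : ∀ j : ℕ, ‖f j - c‖ < ε := by
    intro j
    simp only [hf, add_sub_cancel_left, Complex.norm_real, Real.norm_eq_abs]
    rw [abs_of_pos (hpos j)]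
    rw [div_lt_iff₀ (by positivity)]
    nlinarith [hpos j]
  have hmem : ∀ j ∈ Finset.range (S.card + 1), f j ∈ S := by
    intro j _
    by_contra hj
    exact absurd (hcon _ hj) (not_le.mpr (hdist j))
  have hinj : Set.InjOn f (Finset.range (S.card + 1)) := by
    intro a _ b _ hab
    simp only [hf, add_right_inj, Complex.ofReal_inj] at hab
    field_simp at hab
    have h : (a : ℝ) = b := by linarith
    exact_mod_cast h
  have := Finset.card_le_card_of_injOn f hmem hinj
  simp at this

lemma perturb_invertible {m : ℕ} (M : Matrix (Fin m) (Fin m) ℂ) {ε : ℝ} (hε : 0 < ε) :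
    ∃ M' : Matrix (Fin m) (Fin m) ℂ, IsUnit M'.det ∧ ∀ i j, ‖M' i j - M i j‖ < ε := by
  have hp : (-M).charpoly ≠ 0 := (Matrix.charpoly_monic _).ne_zero
  obtain ⟨z, hz, hzn⟩ := exists_near_avoid (-M).charpoly.roots.toFinset 0 hε
  refine ⟨Matrix.scalar (Fin m) z + M, ?_, ?_⟩
  · rw [isUnit_iff_ne_zero]
    intro h0
    apply hz
    rw [Multiset.mem_toFinset, Polynomial.mem_roots hp]
    show (-M).charpoly.IsRoot z
    rw [Polynomial.IsRoot.def, evalCharpoly, sub_neg_eq_add]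
    exact h0
  · intro i j
    have heq : (Matrix.scalar (Fin m) z + M) i j - M i j = Matrix.scalar (Fin m) z i j := by
      simp [Matrix.add_apply]
    rw [heq]
    rcases eq_or_ne i j with rfl | hij
    · simpa [Matrix.scalar_apply, Matrix.diagonal_apply_eq] using by simpa using hzn
    · simpa [Matrix.scalar_apply, Matrix.diagonal_apply_ne _ hij] using hε

lemma charpoly_conj {m : ℕ} (P N : Matrix (Fin m) (Fin m) ℂ) (hP : IsUnit P.det) :
    (P * N * P⁻¹).charpoly = N.charpoly := by
  have hmap : ∀ (A B : Matrix (Fin m) (Fin m) ℂ),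
      (A * B).map (C : ℂ →+* ℂ[X]) = A.map C * B.map C := fun A B => Matrix.map_mul
  have hchar : charmatrix (P * N * P⁻¹)
      = P.map (C : ℂ →+* ℂ[X]) * charmatrix N * (P⁻¹).map (C : ℂ →+* ℂ[X]) := by
    unfold charmatrix
    simp only [RingHom.mapMatrix_apply]
    rw [Matrix.mul_sub, Matrix.sub_mul]
    congr 1
    · -- scalar X part
      have hc : Commute (Matrix.scalar (Fin m) (X : ℂ[X])) (P.map (C : ℂ →+* ℂ[X])) :=
        Matrix.scalar_commute _ (fun r => Commute.all _ _) _
      calc Matrix.scalar (Fin m) (X : ℂ[X])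
          = Matrix.scalar (Fin m) (X : ℂ[X]) * ((P * P⁻¹).map (C : ℂ →+* ℂ[X])) := by
            rw [Matrix.mul_nonsing_inv _ hP]; simp
        _ = Matrix.scalar (Fin m) (X : ℂ[X]) * (P.map C * (P⁻¹).map C) := by rw [hmap]
        _ = P.map C * Matrix.scalar (Fin m) (X : ℂ[X]) * (P⁻¹).map C := by
            rw [← Matrix.mul_assoc, hc.eq]
    · rw [hmap, hmap, Matrix.mul_assoc]
  have hdet : (P.map (C : ℂ →+* ℂ[X])).det * ((P⁻¹).map (C : ℂ →+* ℂ[X])).det = 1 := by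
    rw [← Matrix.det_mul, ← hmap, Matrix.mul_nonsing_inv _ hP]
    simp
  rw [Matrix.charpoly, Matrix.charpoly, hchar, Matrix.det_mul, Matrix.det_mul]
  ring_nf
  calc (P.map (C : ℂ →+* ℂ[X])).det * (charmatrix N).det * ((P⁻¹).map (C : ℂ →+* ℂ[X])).det
      = (charmatrix N).det * ((P.map (C : ℂ →+* ℂ[X])).det * ((P⁻¹).map (C : ℂ →+* ℂ[X])).det) := by ring
    _ = (charmatrix N).det := by rw [hdet, mul_one]

lemma charpoly_col_zero {m : ℕ} (N : Matrix (Fin (m+1)) (Fin (m+1)) ℂ)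
    (h : ∀ i, i ≠ 0 → N i 0 = 0) :
    N.charpoly = (X - C (N 0 0)) * (N.submatrix Fin.succ Fin.succ).charpoly := by
  have hsub : (charmatrix N).submatrix Fin.succ Fin.succ
      = charmatrix (N.submatrix Fin.succ Fin.succ) := by
    ext i j
    rcases eq_or_ne i j with rfl | hij
    · simp [charmatrix_apply_eq]
    · rw [Matrix.submatrix_apply, charmatrix_apply_ne _ _ _ (fun hc => hij (Fin.succ_injective _ hc)),
        charmatrix_apply_ne _ _ _ hij, Matrix.submatrix_apply]
  rw [Matrix.charpoly, Matrix.det_succ_column_zero]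
  rw [Fintype.sum_eq_single (0 : Fin (m+1))]
  · rw [charmatrix_apply_eq, Fin.succAbove_zero, hsub]
    simp [Matrix.charpoly]
  · intro i hi
    rw [charmatrix_apply_ne _ _ _ hi, h i hi]
    simp

lemma eig_decomp {m : ℕ} (M : Matrix (Fin m) (Fin m) ℂ) (d : Fin m → ℂ)
    (hd : Function.Injective d) (hc : M.charpoly = ∏ i, (X - C (d i))) :
    ∃ P : Matrix (Fin m) (Fin m) ℂ, IsUnit P.det ∧ M = P * diagonal d * P⁻¹ := by
  have hev : ∀ i : Fin m, ∃ v : Fin m → ℂ, v ≠ 0 ∧ M.mulVec v = d i • v := by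
    intro i
    have hdet : (Matrix.scalar (Fin m) (d i) - M).det = 0 := by
      rw [← evalCharpoly, hc, Polynomial.eval_prod]
      exact Finset.prod_eq_zero (Finset.mem_univ i) (by simp)
    obtain ⟨v, hv, hMv⟩ := (Matrix.exists_mulVec_eq_zero_iff).mpr hdet
    refine ⟨v, hv, ?_⟩
    have h2 : (Matrix.scalar (Fin m) (d i)).mulVec v = M.mulVec v := by
      rwa [Matrix.sub_mulVec, sub_eq_zero] at hMv
    rw [← h2]
    funext p
    simp [Matrix.scalar_apply, Matrix.mulVec_diagonal, smul_eq_mul]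
  choose v hv hMv using hev
  have hli : LinearIndependent ℂ v := by
    apply Module.End.eigenvectors_linearIndependent' (Matrix.mulVecLin M) d hd v
    intro i
    refine ⟨Module.End.mem_eigenspace_iff.mpr ?_, hv i⟩
    simpa [Matrix.mulVecLin_apply] using hMv i
  set P : Matrix (Fin m) (Fin m) ℂ := Matrix.of (fun i j => v j i) with hPdef
  have hPt : (fun j => Pᵀ j) = v := by
    funext j i; simp [hPdef, Matrix.transpose_apply]
  have hPu : IsUnit P := Matrix.linearIndependent_cols_iff_isUnit.mp (by rw [show P.col = v from hPt]; exact hli)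
  have hPd : IsUnit P.det := (Matrix.isUnit_iff_isUnit_det P).mp hPu
  refine ⟨P, hPd, ?_⟩
  have hMP : M * P = P * diagonal d := by
    ext i j
    rw [Matrix.mul_apply, Matrix.mul_diagonal]
    have : ∑ k, M i k * P k j = (M.mulVec (v j)) i := by
      rw [Matrix.mulVec]; simp [dotProduct, hPdef]
    rw [this, hMv j]
    simp [hPdef, mul_comm]
  calc M = M * P * P⁻¹ := by rw [Matrix.mul_nonsing_inv_cancel_right _ _ hPd]
    _ = P * diagonal d * P⁻¹ := by rw [hMP]

lemma conj_entry_bound {m : ℕ} (P Q D : Matrix (Fin m) (Fin m) ℂ) {d : ℝ} (hd : 0 ≤ d)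
    (hD : ∀ k l, ‖D k l‖ ≤ d) (i j : Fin m) :
    ‖(P * D * Q) i j‖ ≤ d * ((∑ i', ∑ k, ‖P i' k‖) * (∑ l, ∑ j', ‖Q l j'‖)) := by
  have hentry : (P * D * Q) i j = ∑ l, (∑ k, P i k * D k l) * Q l j := by
    simp only [Matrix.mul_apply]
  rw [hentry]
  calc ‖∑ l, (∑ k, P i k * D k l) * Q l j‖
      ≤ ∑ l, ‖(∑ k, P i k * D k l) * Q l j‖ := norm_sum_le _ _
    _ = ∑ l, ‖∑ k, P i k * D k l‖ * ‖Q l j‖ := by simp only [norm_mul]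
    _ ≤ ∑ l, (∑ k, ‖P i k‖ * d) * ‖Q l j‖ := by
        gcongr with l hl
        calc ‖∑ k, P i k * D k l‖ ≤ ∑ k, ‖P i k * D k l‖ := norm_sum_le _ _
          _ = ∑ k, ‖P i k‖ * ‖D k l‖ := by simp only [norm_mul]
          _ ≤ ∑ k, ‖P i k‖ * d := by
              gcongr with k hk
              exact hD k l
    _ = d * ((∑ k, ‖P i k‖) * (∑ l, ‖Q l j‖)) := by
        rw [← Finset.mul_sum, ← Finset.sum_mul]; ring
    _ ≤ d * ((∑ i', ∑ k, ‖P i' k‖) * (∑ l, ∑ j', ‖Q l j'‖)) := by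
        have h9 : (∑ k, ‖P i k‖) ≤ ∑ i', ∑ k, ‖P i' k‖ :=
          Finset.single_le_sum (f := fun i' => ∑ k, ‖P i' k‖)
            (fun _ _ => Finset.sum_nonneg fun _ _ => norm_nonneg _) (Finset.mem_univ i)
        have h10 : (∑ l, ‖Q l j‖) ≤ ∑ l, ∑ j', ‖Q l j'‖ :=
          Finset.sum_le_sum fun l _ => Finset.single_le_sum (f := fun j' => ‖Q l j'‖)
            (fun _ _ => norm_nonneg _) (Finset.mem_univ j)
        exact mul_le_mul_of_nonneg_left
          (mul_le_mul h9 h10 (Finset.sum_nonneg fun _ _ => norm_nonneg _)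
            (Finset.sum_nonneg fun _ _ => Finset.sum_nonneg fun _ _ => norm_nonneg _)) hd

lemma dense_distinct : ∀ (m : ℕ) (M : Matrix (Fin m) (Fin m) ℂ) (ε : ℝ), 0 < ε →
    ∃ (M' : Matrix (Fin m) (Fin m) ℂ) (d : Fin m → ℂ), Function.Injective d ∧
      M'.charpoly = ∏ i, (X - C (d i)) ∧ ∀ i j, ‖M' i j - M i j‖ < ε := by
  intro m
  induction m with
  | zero =>
      intro M ε hε
      refine ⟨M, finZeroElim, fun a => a.elim0, ?_, fun i j => i.elim0⟩
      rw [Matrix.charpoly]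
      simp [Matrix.det_isEmpty]
  | succ m ih =>
      intro M ε hε
      -- find an eigenvalue and eigenvector of M
      have hdeg : (0 : WithBot ℕ) < M.charpoly.degree := by
        rw [Matrix.charpoly_degree_eq_dim]
        simp only [Fintype.card_fin]
        exact_mod_cast Nat.succ_pos m
      obtain ⟨lam, hlam⟩ := Complex.exists_root hdeg
      have hdet0 : (Matrix.scalar (Fin (m+1)) lam - M).det = 0 := by
        rw [← evalCharpoly]; exact hlam
      obtain ⟨v, hv0, hveq⟩ := Matrix.exists_mulVec_eq_zero_iff.mpr hdet0
      have hMv : M.mulVec v = lam • v := by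
        have h2 : (Matrix.scalar (Fin (m+1)) lam).mulVec v = M.mulVec v := by
          rwa [Matrix.sub_mulVec, sub_eq_zero] at hveq
        rw [← h2]
        funext p
        simp [Matrix.scalar_apply, Matrix.mulVec_diagonal, smul_eq_mul]
      obtain ⟨i0, hi0⟩ : ∃ i0, v i0 ≠ 0 := by
        by_contra h; push_neg at h; exact hv0 (funext fun i => h i)
      -- an invertible matrix P whose 0-th column is v
      set e0 : Fin (m+1) → ℂ := Pi.single i0 1 with he0
      set P0 : Matrix (Fin (m+1)) (Fin (m+1)) ℂ :=
        1 + Matrix.replicateCol Unit (v - e0) * Matrix.replicateRow Unit e0 with hP0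
      have hP0det : P0.det = v i0 := by
        rw [hP0, Matrix.det_one_add_replicateCol_mul_replicateRow]
        simp [he0, dotProduct, Pi.single_apply]
      have hP0col : ∀ j, P0 j i0 = v j := by
        intro j
        rw [hP0]
        simp only [Matrix.add_apply, Matrix.mul_apply, Matrix.replicateCol_apply, Matrix.replicateRow_apply,
          Finset.univ_unique, Finset.sum_singleton, Matrix.one_apply]
        rcases eq_or_ne j i0 with rfl | hj
        · simp [he0, Pi.single_apply]
        · simp [he0, Pi.single_apply, hj]
      set σ : Equiv.Perm (Fin (m+1)) := Equiv.swap 0 i0 with hσ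
      set P : Matrix (Fin (m+1)) (Fin (m+1)) ℂ := P0.submatrix id σ with hPdef
      have hPdet : IsUnit P.det := by
        rw [hPdef, Matrix.det_permute' σ P0, hP0det, isUnit_iff_ne_zero]
        rcases Int.units_eq_one_or (Equiv.Perm.sign σ) with hs | hs <;>
          rw [hs] <;> simp [hi0]
      have hPcol : ∀ j, P j 0 = v j := by
        intro j
        rw [hPdef, Matrix.submatrix_apply, id_eq, hσ, Equiv.swap_apply_left]
        exact hP0col j
      clear hP0det hP0col hPdef
      clear_value P
      clear hσ hP0 he0
      clear σ P0 e0
      set N : Matrix (Fin (m+1)) (Fin (m+1)) ℂ := P⁻¹ * M * P with hNdef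
      have hPP : P * P⁻¹ = 1 := Matrix.mul_nonsing_inv _ hPdet
      have hPP' : P⁻¹ * P = 1 := Matrix.nonsing_inv_mul _ hPdet
      have hMPN : P * N * P⁻¹ = M := by
        rw [hNdef]
        simp only [Matrix.mul_assoc]
        rw [hPP, Matrix.mul_one, ← Matrix.mul_assoc, hPP, Matrix.one_mul]
      have hNcol : ∀ j, N j 0 = if j = 0 then lam else 0 := by
        have hMPcol : ∀ k, (M * P) k 0 = lam * P k 0 := by
          intro k
          rw [Matrix.mul_apply]
          have h3 : ∑ l, M k l * P l 0 = M.mulVec v k := by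
            simp [Matrix.mulVec, dotProduct, hPcol]
          rw [h3, hMv, Pi.smul_apply, smul_eq_mul, hPcol]
        intro j
        have h4 : N j 0 = ∑ k, P⁻¹ j k * (M * P) k 0 := by
          rw [hNdef, Matrix.mul_assoc, Matrix.mul_apply]
        rw [h4]
        simp_rw [hMPcol]
        have h5 : ∑ k, P⁻¹ j k * (lam * P k 0) = lam * ∑ k, P⁻¹ j k * P k 0 := by
          rw [Finset.mul_sum]; congr 1; funext k; ring
        rw [h5]
        have h6 : ∑ k, P⁻¹ j k * P k 0 = (P⁻¹ * P) j 0 := (Matrix.mul_apply).symm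
        rw [h6, hPP', Matrix.one_apply]
        by_cases hj : j = 0 <;> simp [hj]
      -- constants for the conjugation bound
      set SP : ℝ := ∑ i, ∑ k, ‖P i k‖ with hSP
      set SQ : ℝ := ∑ l, ∑ j, ‖P⁻¹ l j‖ with hSQ
      have hSPnn : 0 ≤ SP := Finset.sum_nonneg fun _ _ => Finset.sum_nonneg fun _ _ => norm_nonneg _
      have hSQnn : 0 ≤ SQ := Finset.sum_nonneg fun _ _ => Finset.sum_nonneg fun _ _ => norm_nonneg _
      set K : ℝ := 1 + SP * SQ with hK
      have hKpos : 0 < K := by positivity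
      set δ : ℝ := ε / (2 * K) with hδdef
      have hδ : 0 < δ := by positivity
      obtain ⟨M₁', d₁, hd₁, hchar₁, hclose₁⟩ := ih (N.submatrix Fin.succ Fin.succ) δ hδ
      obtain ⟨lam', hlam'S, hlam'c⟩ := exists_near_avoid (Finset.univ.image d₁) (N 0 0) hδ
      set N' : Matrix (Fin (m+1)) (Fin (m+1)) ℂ := Matrix.of (fun i j =>
        if hj : j = 0 then (if i = 0 then lam' else 0)
        else if hi : i = 0 then N i j else M₁' (i.pred hi) (j.pred hj)) with hN'def
      have hN'col : ∀ i, i ≠ 0 → N' i 0 = 0 := by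
        intro i hi; simp [hN'def, hi]
      have hN'00 : N' 0 0 = lam' := by simp [hN'def]
      have hN'sub : N'.submatrix Fin.succ Fin.succ = M₁' := by
        ext i j
        simp [hN'def, Fin.succ_ne_zero, Fin.pred_succ]
      have hN'char : N'.charpoly = ∏ i : Fin (m+1), (X - C (Fin.cons lam' d₁ i)) := by
        rw [charpoly_col_zero N' hN'col, hN'sub, hchar₁, hN'00, Fin.prod_univ_succ]
        simp
      have hN'close : ∀ k l, ‖N' k l - N k l‖ ≤ δ := by
        intro k l
        by_cases hl : l = 0
        · subst hl
          by_cases hk : k = 0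
          · subst hk
            rw [hN'00, hNcol 0, if_pos rfl]
            have := hNcol 0
            calc ‖lam' - lam‖ = ‖lam' - N 0 0‖ := by rw [hNcol 0, if_pos rfl]
              _ ≤ δ := le_of_lt hlam'c
          · rw [hN'col k hk, hNcol k, if_neg hk]
            simp [hδ.le]
        · by_cases hk : k = 0
          · subst hk
            have : N' 0 l = N 0 l := by simp [hN'def, hl]
            rw [this]; simp [hδ.le]
          · have h7 : N' k l = M₁' (k.pred hk) (l.pred hl) := by simp [hN'def, hl, hk]
            have h8 : N k l = N.submatrix Fin.succ Fin.succ (k.pred hk) (l.pred hl) := by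
              rw [Matrix.submatrix_apply, Fin.succ_pred, Fin.succ_pred]
            rw [h7, h8]
            exact le_of_lt (hclose₁ _ _)
      set M' : Matrix (Fin (m+1)) (Fin (m+1)) ℂ := P * N' * P⁻¹ with hM'def
      have hdinj : Function.Injective (Fin.cons lam' d₁ : Fin (m+1) → ℂ) := by
        intro a b hab
        rcases Fin.eq_zero_or_eq_succ a with rfl | ⟨a', rfl⟩ <;>
          rcases Fin.eq_zero_or_eq_succ b with rfl | ⟨b', rfl⟩
        · rfl
        · exfalso
          rw [Fin.cons_zero, Fin.cons_succ] at hab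
          exact hlam'S (Finset.mem_image.mpr ⟨b', Finset.mem_univ _, hab.symm⟩)
        · exfalso
          rw [Fin.cons_zero, Fin.cons_succ] at hab
          exact hlam'S (Finset.mem_image.mpr ⟨a', Finset.mem_univ _, hab⟩)
        · rw [Fin.cons_succ, Fin.cons_succ] at hab
          rw [hd₁ hab]
      refine ⟨M', Fin.cons lam' d₁, hdinj, ?_, ?_⟩
      · rw [hM'def, charpoly_conj _ _ hPdet, hN'char]
      · intro i j
        have hdiff : M' i j - M i j = (P * (N' - N) * P⁻¹) i j := by
          rw [← hMPN, hM'def, Matrix.mul_sub, Matrix.sub_mul, Matrix.sub_apply]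
        rw [hdiff]
        have hbound := conj_entry_bound P P⁻¹ (N' - N) hδ.le
          (fun k l => by simpa using hN'close k l) i j
        rw [← hSP, ← hSQ] at hbound
        have h12 : δ * (SP * SQ) ≤ δ * K := by
          apply mul_le_mul_of_nonneg_left _ hδ.le
          rw [hK]
          linarith [mul_nonneg hSPnn hSQnn]
        have h13 : δ * K = ε / 2 := by
          rw [hδdef, div_mul_eq_mul_div, mul_div_mul_right _ _ (ne_of_gt hKpos)]
        calc ‖(P * (N' - N) * P⁻¹) i j‖ ≤ δ * (SP * SQ) := hbound
          _ ≤ δ * K := h12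
          _ = ε / 2 := h13
          _ < ε := by linarith

lemma rank_lower {n r : ℕ} (B : Fin n → Fin n → Fin 2 → ℂ)
    (hB1 : IsUnit (Matrix.of (fun p q => B p q 1)).det)
    (x : Fin r → Fin n → ℂ) (y : Fin r → Fin n → ℂ) (z : Fin r → Fin 2 → ℂ)
    (hdec : B = ∑ i : Fin r, fun p q s => x i p * y i q * z i s) : n ≤ r := by
  set X1 : Matrix (Fin n) (Fin n) ℂ := Matrix.of (fun p q => B p q 1) with hX1
  have hBentry : ∀ p q, X1 p q = ∑ i : Fin r, x i p * y i q * z i 1 := by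
    intro p q
    have := congrFun (congrFun (congrFun hdec p) q) (1 : Fin 2)
    simpa [Finset.sum_apply, hX1] using this
  have hrank : X1.rank = n := by
    rw [Matrix.rank_of_isUnit X1 ((Matrix.isUnit_iff_isUnit_det X1).mpr hB1)]
    simp
  have hle : X1.rank ≤ r := by
    have hrange : LinearMap.range X1.mulVecLin ≤ Submodule.span ℂ (Set.range x) := by
      rintro w ⟨u, rfl⟩
      have : X1.mulVecLin u = ∑ i : Fin r, (∑ q, y i q * z i 1 * u q) • x i := by
        funext p
        simp only [Matrix.mulVecLin_apply, Matrix.mulVec, dotProduct]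
        rw [Finset.sum_apply]
        simp_rw [hBentry, Finset.sum_mul]
        rw [Finset.sum_comm]
        congr 1; funext i
        rw [Pi.smul_apply, smul_eq_mul, Finset.sum_mul]
        congr 1; funext q
        ring
      rw [this]
      exact Submodule.sum_mem _ fun i _ =>
        Submodule.smul_mem _ _ (Submodule.subset_span (Set.mem_range_self i))
    calc X1.rank = Module.finrank ℂ (LinearMap.range X1.mulVecLin) := rfl
      _ ≤ Module.finrank ℂ (Submodule.span ℂ (Set.range x)) := Submodule.finrank_mono hrange
      _ ≤ (Set.range x).toFinset.card := finrank_span_le_card (Set.range x)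
      _ ≤ r := by
          rw [Set.toFinset_range]
          exact le_trans (Finset.card_image_le) (by simp)
  omega

lemma main_approx {n : ℕ} (A : Fin n → Fin n → Fin 2 → ℂ)
    (nrm : Seminorm ℂ (Fin n → Fin n → Fin 2 → ℂ)) {ε : ℝ} (hε : 0 < ε) :
    ∃ B : Fin n → Fin n → Fin 2 → ℂ, tensorRank B = n ∧ nrm (A - B) < ε := by
  classical
  set e : Fin n → Fin n → Fin 2 → (Fin n → Fin n → Fin 2 → ℂ) := fun i j k =>
    (fun p q s => (if i = p then (1:ℂ) else 0) * ((if j = q then (1:ℂ) else 0) *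
      (if k = s then (1:ℂ) else 0))) with he
  set K : ℝ := 1 + ∑ i, ∑ j, ∑ k, nrm (e i j k) with hK
  have hsum_nn : (0:ℝ) ≤ ∑ i, ∑ j, ∑ k, nrm (e i j k) :=
    Finset.sum_nonneg fun _ _ => Finset.sum_nonneg fun _ _ =>
      Finset.sum_nonneg fun _ _ => apply_nonneg _ _
  have hKpos : 0 < K := by rw [hK]; linarith
  have hnrm_le : ∀ (X : Fin n → Fin n → Fin 2 → ℂ) (δ : ℝ), 0 ≤ δ →
      (∀ i j k, ‖X i j k‖ ≤ δ) → nrm X ≤ δ * K := by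
    intro X δ hδ hX
    have hdecomp : X = ∑ i, ∑ j, ∑ k, X i j k • e i j k := by
      funext p q s
      simp only [Finset.sum_apply, Pi.smul_apply, smul_eq_mul, he]
      simp only [mul_ite, ite_mul, mul_one, mul_zero, zero_mul, one_mul,
        Finset.sum_ite_eq, Finset.sum_ite_eq', Finset.mem_univ, if_true]
    calc nrm X ≤ ∑ i, ∑ j, ∑ k, ‖X i j k‖ * nrm (e i j k) := by
          conv_lhs => rw [hdecomp]
          refine le_trans (snorm_sum_le nrm _ _) (Finset.sum_le_sum fun i _ => ?_)
          refine le_trans (snorm_sum_le nrm _ _) (Finset.sum_le_sum fun j _ => ?_)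
          refine le_trans (snorm_sum_le nrm _ _) (Finset.sum_le_sum fun k _ => ?_)
          exact le_of_eq (map_smul_eq_mul nrm _ _)
      _ ≤ ∑ i, ∑ j, ∑ k, δ * nrm (e i j k) := by
          gcongr with i _ j _ k _
          exact hX i j k
      _ = δ * ∑ i, ∑ j, ∑ k, nrm (e i j k) := by simp only [Finset.mul_sum]
      _ ≤ δ * K := by
          apply mul_le_mul_of_nonneg_left _ hδ
          rw [hK]; linarith
  set δ : ℝ := ε / (2 * K) with hδdef
  have hδ : 0 < δ := by positivity
  set A0 : Matrix (Fin n) (Fin n) ℂ := Matrix.of (fun i j => A i j 0) with hA0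
  set A1 : Matrix (Fin n) (Fin n) ℂ := Matrix.of (fun i j => A i j 1) with hA1
  obtain ⟨B1, hB1, hB1c⟩ := perturb_invertible A1 hδ
  set K2 : ℝ := 1 + ∑ i, ∑ k, ‖B1 i k‖ with hK2
  have hK2sum : (0:ℝ) ≤ ∑ i, ∑ k, ‖B1 i k‖ :=
    Finset.sum_nonneg fun _ _ => Finset.sum_nonneg fun _ _ => norm_nonneg _
  have hK2pos : 0 < K2 := by rw [hK2]; linarith
  set δ2 : ℝ := δ / K2 with hδ2def
  have hδ2 : 0 < δ2 := by positivity
  obtain ⟨M₁, d, hd, hchar, hMc⟩ := dense_distinct n (B1⁻¹ * A0) δ2 hδ2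
  obtain ⟨P, hP, hdec⟩ := eig_decomp M₁ d hd hchar
  set B0 : Matrix (Fin n) (Fin n) ℂ := B1 * M₁ with hB0
  set B : Fin n → Fin n → Fin 2 → ℂ :=
    fun p q s => if s = 0 then B0 p q else B1 p q with hB
  have hPP : P * P⁻¹ = 1 := Matrix.mul_nonsing_inv _ hP
  -- entry bound for B0 - A0
  have hB0c : ∀ i j, ‖B0 i j - A0 i j‖ ≤ δ := by
    intro i j
    have hA0eq : B1 * (B1⁻¹ * A0) = A0 := by
      rw [← Matrix.mul_assoc, Matrix.mul_nonsing_inv _ hB1, Matrix.one_mul]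
    have hsub : B0 - A0 = B1 * (M₁ - B1⁻¹ * A0) := by
      rw [Matrix.mul_sub, hA0eq, hB0]
    have : B0 i j - A0 i j = (B1 * (M₁ - B1⁻¹ * A0)) i j := by
      rw [← hsub, Matrix.sub_apply]
    rw [this, Matrix.mul_apply]
    have hsingle : (∑ k, ‖B1 i k‖) ≤ K2 := by
      rw [hK2]
      have := Finset.single_le_sum (f := fun i' => ∑ k, ‖B1 i' k‖)
        (fun _ _ => Finset.sum_nonneg fun _ _ => norm_nonneg _) (Finset.mem_univ i)
      linarith
    calc ‖∑ k, B1 i k * (M₁ - B1⁻¹ * A0) k j‖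
        ≤ ∑ k, ‖B1 i k * (M₁ - B1⁻¹ * A0) k j‖ := norm_sum_le _ _
      _ = ∑ k, ‖B1 i k‖ * ‖(M₁ - B1⁻¹ * A0) k j‖ := by simp only [norm_mul]
      _ ≤ ∑ k, ‖B1 i k‖ * δ2 := by
          gcongr with k _
          exact le_of_lt (by simpa [Matrix.sub_apply] using hMc k j)
      _ = (∑ k, ‖B1 i k‖) * δ2 := (Finset.sum_mul _ _ _).symm
      _ ≤ K2 * δ2 := mul_le_mul_of_nonneg_right hsingle hδ2.le
      _ = δ := by rw [hδ2def, mul_comm, div_mul_cancel₀ _ (ne_of_gt hK2pos)]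
  -- entrywise bound for A - B
  have hABc : ∀ i j k, ‖(A - B) i j k‖ ≤ δ := by
    intro i j k
    have hsplit : (A - B) i j k = A i j k - B i j k := rfl
    rw [hsplit]
    by_cases hk : k = 0
    · subst hk
      have h1 : B i j 0 = B0 i j := by simp [hB]
      have h2 : A i j 0 = A0 i j := rfl
      rw [h1, h2, norm_sub_rev]
      exact hB0c i j
    · have hk1 : k = 1 := by
        have h3 := k.isLt
        have h4 : (k : ℕ) ≠ 0 := fun h => hk (Fin.ext (by simpa using h))
        exact Fin.ext (by omega)
      subst hk1
      have h1 : B i j 1 = B1 i j := by simp [hB]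
      have h2 : A i j 1 = A1 i j := rfl
      rw [h1, h2, norm_sub_rev]
      exact le_of_lt (hB1c i j)
  -- tensor rank of B is exactly n
  have hrank : tensorRank B = n := by
    have hmem : n ∈ {r : ℕ | ∃ (x : Fin r → Fin n → ℂ) (y : Fin r → Fin n → ℂ)
        (z : Fin r → Fin 2 → ℂ), B = ∑ i : Fin r, fun p q s => x i p * y i q * z i s} := by
      refine ⟨fun i p => (B1 * P) p i, fun i q => P⁻¹ i q,
        fun i s => if s = 0 then d i else 1, ?_⟩
      funext p q s
      simp only [Finset.sum_apply]
      by_cases hs : s = 0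
      · subst hs
        have hBpq : B p q 0 = B0 p q := by simp [hB]
        have hB0eq : B0 p q = ∑ i, (B1 * P) p i * (d i * P⁻¹ i q) := by
          have h1 : B0 = (B1 * P) * (diagonal d * P⁻¹) := by
            rw [hB0, hdec]; simp only [Matrix.mul_assoc]
          rw [h1, Matrix.mul_apply]
          congr 1; funext i
          rw [Matrix.diagonal_mul]
        rw [hBpq, hB0eq]
        refine Finset.sum_congr rfl fun i _ => ?_
        simp only [if_true, eq_self_iff_true]
        ring
      · have hs1 : s = 1 := by
          have h3 := s.isLt
          have h4 : (s : ℕ) ≠ 0 := fun h => hs (Fin.ext (by simpa using h))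
          exact Fin.ext (by omega)
        subst hs1
        have hBpq : B p q 1 = B1 p q := by simp [hB]
        have hB1eq : B1 p q = ∑ i, (B1 * P) p i * P⁻¹ i q := by
          have h1 : B1 = (B1 * P) * P⁻¹ := by
            rw [Matrix.mul_assoc, hPP, Matrix.mul_one]
          conv_lhs => rw [h1]
          rw [Matrix.mul_apply]
        rw [hBpq, hB1eq]
        refine Finset.sum_congr rfl fun i _ => ?_
        simp
    have hupper : tensorRank B ≤ n := Nat.sInf_le hmem
    have hlower : n ≤ tensorRank B := by
      have hne : {r : ℕ | ∃ (x : Fin r → Fin n → ℂ) (y : Fin r → Fin n → ℂ)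
          (z : Fin r → Fin 2 → ℂ), B = ∑ i : Fin r, fun p q s =>
            x i p * y i q * z i s}.Nonempty := ⟨n, hmem⟩
      obtain ⟨x, y, z, hdecB⟩ := Nat.sInf_mem hne
      refine rank_lower B ?_ x y z hdecB
      have : (Matrix.of fun p q => B p q 1) = B1 := by
        ext p q
        rw [Matrix.of_apply, hB]; simp
      rw [this]
      exact hB1
    omega
  refine ⟨B, hrank, ?_⟩
  calc nrm (A - B) ≤ δ * K := hnrm_le _ δ hδ.le hABc
    _ = ε / 2 := by
        rw [hδdef, div_mul_eq_mul_div, mul_comm (2:ℝ) K, ← div_div,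
          mul_div_assoc, div_self (ne_of_gt hKpos), mul_one]
    _ < ε := by linarith


end AuxLemmas

/-- Let `n ≥ 2`, let `A ∈ ℂ^{n×n×2}` and let `‖·‖` be a norm on `ℂ^{n×n×2}` (modelled as a
`Seminorm` over `ℂ` which vanishes only at `0`). Then
`inf { ‖A − B‖ : B ∈ ℂ^{n×n×2}, rank(B) = n } = 0`: every tensor may be approximated
arbitrarily closely by tensors of tensor rank exactly `n`. -/
theorem sInf_dist_to_rank_n_tensors_eq_zero
    {n : ℕ} (hn : 2 ≤ n) (A : Fin n → Fin n → Fin 2 → ℂ)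
    (nrm : Seminorm ℂ (Fin n → Fin n → Fin 2 → ℂ))
    (hnrm : ∀ x, nrm x = 0 → x = 0) :
    sInf {d : ℝ | ∃ B : Fin n → Fin n → Fin 2 → ℂ, tensorRank B = n ∧ d = nrm (A - B)} = 0 := by
  set S := {d : ℝ | ∃ B : Fin n → Fin n → Fin 2 → ℂ, tensorRank B = n ∧ d = nrm (A - B)} with hS
  have hbdd : BddBelow S := ⟨0, by rintro t ⟨B, -, rfl⟩; exact apply_nonneg nrm _⟩
  have hne : S.Nonempty := by
    obtain ⟨B, hB, -⟩ := main_approx A nrm one_pos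
    exact ⟨nrm (A - B), B, hB, rfl⟩
  refine le_antisymm ?_ (Real.sInf_nonneg fun t ht => ?_)
  · rw [Real.sInf_le_iff hbdd hne]
    intro ε hε
    obtain ⟨B, hB, hBc⟩ := main_approx A nrm hε
    exact ⟨nrm (A - B), ⟨B, hB, rfl⟩, by simpa using hBc⟩
  · obtain ⟨B, -, rfl⟩ := ht
    exact apply_nonneg nrm _
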